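/- Let 0 < a < b and let f : [a,b] → ℝ be continuous on [a,b] and differentiable on (a,b). Let a = x₀ < x₁ < ⋯ < xₙ = b be a partition of [a,b] with step sizes hᵢ := xᵢ₊₁ − xᵢ, and define the midpoint rule Mₙ := Σ_{i=0}^{n−1} f((xᵢ + xᵢ₊₁)/2)·hᵢ. Then the remainder Rₙ := ∫ₐᵇ f(t) dt − Mₙ satisfies |Rₙ| ≤ (‖f − ℓf′‖∞/2)·Σ_{i=0}^{n−1} hᵢ²/(xᵢ + xᵢ₊₁) ≤ (‖f − ℓf′‖∞/(4a))·Σ_{i=0}^{n−1} hᵢ². -/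

import Mathlib

open Set

lemma pompeiu_key (a b : ℝ) (f : ℝ → ℝ) (ha : 0 < a)
    (hf : ContinuousOn f (Set.Icc a b))
    (hd : DifferentiableOn ℝ f (Set.Ioo a b))
    {s t : ℝ} (hs : s ∈ Set.Icc a b) (ht : t ∈ Set.Icc a b) (hst : s < t) :
    ∃ ξ ∈ Set.Ioo a b, s * f t - t * f s = (s - t) * (f ξ - ξ * deriv f ξ) := by
  have hsub : Set.Ioo s t ⊆ Set.Ioo a b := Set.Ioo_subset_Ioo hs.1 ht.2
  have hsubI : Set.Icc s t ⊆ Set.Icc a b := Set.Icc_subset_Icc hs.1 ht.2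
  have hs0 : 0 < s := lt_of_lt_of_le ha hs.1
  have hne : ∀ u ∈ Set.Icc s t, u ≠ 0 := fun u hu => ne_of_gt (lt_of_lt_of_le hs0 hu.1)
  have hFc : ContinuousOn (fun u => f u / u) (Set.Icc s t) :=
    (hf.mono hsubI).div continuousOn_id hne
  have hGc : ContinuousOn (fun u : ℝ => u⁻¹) (Set.Icc s t) :=
    ContinuousOn.inv₀ continuousOn_id hne
  have hFd : ∀ ξ ∈ Set.Ioo s t,
      HasDerivAt (fun u => f u / u) ((deriv f ξ * ξ - f ξ * 1) / ξ ^ 2) ξ := by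
    intro ξ hξ
    have hξab := hsub hξ
    have hdξ : DifferentiableAt ℝ f ξ := hd.differentiableAt (isOpen_Ioo.mem_nhds hξab)
    exact hdξ.hasDerivAt.div (hasDerivAt_id ξ) (ne_of_gt (lt_trans hs0 hξ.1))
  have hGd : ∀ ξ ∈ Set.Ioo s t, HasDerivAt (fun u : ℝ => u⁻¹) (-(ξ ^ 2)⁻¹) ξ :=
    fun ξ hξ => hasDerivAt_inv (ne_of_gt (lt_trans hs0 hξ.1))
  obtain ⟨ξ, hξ, hc⟩ := exists_ratio_hasDerivAt_eq_ratio_slope (fun u => f u / u)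
    (fun ξ => (deriv f ξ * ξ - f ξ * 1) / ξ ^ 2) hst hFc hFd
    (fun u : ℝ => u⁻¹) (fun ξ => -(ξ ^ 2)⁻¹) hGc hGd
  refine ⟨ξ, hsub hξ, ?_⟩
  have hξ0 : ξ ≠ 0 := ne_of_gt (lt_trans hs0 hξ.1)
  have ht0 : t ≠ 0 := ne_of_gt (lt_trans hs0 hst)
  field_simp at hc
  nlinarith [sq_nonneg ξ, hc]

lemma pompeiu_bound (a b : ℝ) (f : ℝ → ℝ) (ha : 0 < a)
    (hf : ContinuousOn f (Set.Icc a b))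
    (hd : DifferentiableOn ℝ f (Set.Ioo a b))
    (hbdd : BddAbove ((fun ξ => |f ξ - ξ * deriv f ξ|) '' Set.Ioo a b))
    {s t : ℝ} (hs : s ∈ Set.Icc a b) (ht : t ∈ Set.Icc a b) :
    |s * f t - t * f s| ≤
      sSup ((fun ξ => |f ξ - ξ * deriv f ξ|) '' Set.Ioo a b) * |t - s| := by
  set M := sSup ((fun ξ => |f ξ - ξ * deriv f ξ|) '' Set.Ioo a b) with hM
  have key : ∀ u v : ℝ, u ∈ Set.Icc a b → v ∈ Set.Icc a b → u < v →
      |u * f v - v * f u| ≤ M * |v - u| := by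
    intro u v hu hv huv
    obtain ⟨ξ, hξ, he⟩ := pompeiu_key a b f ha hf hd hu hv huv
    rw [he, abs_mul]
    have hle : |f ξ - ξ * deriv f ξ| ≤ M :=
      le_csSup hbdd (Set.mem_image_of_mem _ hξ)
    have : |u - v| = |v - u| := abs_sub_comm u v
    rw [this, mul_comm]
    exact mul_le_mul_of_nonneg_right hle (abs_nonneg _)
  rcases lt_trichotomy s t with h | h | h
  · exact key s t hs ht h
  · simp [h]
  · have := key t s ht hs h
    calc |s * f t - t * f s| = |t * f s - s * f t| := abs_sub_comm _ _
      _ ≤ M * |s - t| := this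
      _ = M * |t - s| := by rw [abs_sub_comm]

lemma midpoint_interval (a b : ℝ) (f : ℝ → ℝ) (ha : 0 < a)
    (hf : ContinuousOn f (Set.Icc a b))
    (hd : DifferentiableOn ℝ f (Set.Ioo a b))
    (hbdd : BddAbove ((fun ξ => |f ξ - ξ * deriv f ξ|) '' Set.Ioo a b))
    {u v : ℝ} (hu : u ∈ Set.Icc a b) (hv : v ∈ Set.Icc a b) (huv : u < v) :
    |(∫ t in u..v, f t) - f ((u + v) / 2) * (v - u)| ≤
      sSup ((fun ξ => |f ξ - ξ * deriv f ξ|) '' Set.Ioo a b) / 2 *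
        ((v - u) ^ 2 / (u + v)) := by
  set M := sSup ((fun ξ => |f ξ - ξ * deriv f ξ|) '' Set.Ioo a b) with hM
  set m := (u + v) / 2 with hm
  have hu0 : 0 < u := lt_of_lt_of_le ha hu.1
  have hm0 : 0 < m := by simp only [hm]; linarith
  have hmmem : m ∈ Set.Icc a b := ⟨by rcases hu.1 with h; rcases hv.1 with h'; simp only [hm]; linarith,
    by rcases hu.2 with h; rcases hv.2 with h'; simp only [hm]; linarith⟩
  have hle : u ≤ v := le_of_lt huv
  have hsubI : Set.Icc u v ⊆ Set.Icc a b := Set.Icc_subset_Icc hu.1 hv.2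
  have hfint : IntervalIntegrable f MeasureTheory.volume u v :=
    (hf.mono hsubI).intervalIntegrable_of_Icc hle
  -- linear part integrates to f m * (v - u)
  have hlin : (∫ t in u..v, f m / m * t) = f m * (v - u) := by
    have huv0 : u + v ≠ 0 := by linarith [hu0, huv]
    rw [intervalIntegral.integral_const_mul, integral_id, hm]
    field_simp
    ring
  have hlint : IntervalIntegrable (fun t => f m / m * t) MeasureTheory.volume u v :=
    (continuous_const.mul continuous_id).intervalIntegrable u v
  have hsplit : (∫ t in u..v, f t) - f m * (v - u)
      = ∫ t in u..v, (f t - f m / m * t) := by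
    rw [intervalIntegral.integral_sub hfint hlint, hlin]
  -- pointwise bound
  have hpt : ∀ t ∈ Set.Icc u v, |f t - f m / m * t| ≤ M / m * |t - m| := by
    intro t htm
    have hb := pompeiu_bound a b f ha hf hd hbdd hmmem (hsubI htm)
    have heq : f t - f m / m * t = (m * f t - t * f m) / m := by
      field_simp
    rw [heq, abs_div, abs_of_pos hm0]
    rw [div_le_iff₀ hm0] at *
    calc |m * f t - t * f m| ≤ M * |t - m| := hb
      _ = M / m * |t - m| * m := by field_simp
  -- integrability
  have hgc : ContinuousOn (fun t => f t - f m / m * t) (Set.Icc u v) :=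
    (hf.mono hsubI).sub (continuousOn_const.mul continuousOn_id)
  have hgint : IntervalIntegrable (fun t => |f t - f m / m * t|) MeasureTheory.volume u v :=
    hgc.abs.intervalIntegrable_of_Icc hle
  have hbint : IntervalIntegrable (fun t => M / m * |t - m|) MeasureTheory.volume u v :=
    (continuous_const.mul (continuous_id.sub continuous_const).abs).intervalIntegrable u v
  have habs : |∫ t in u..v, (f t - f m / m * t)| ≤ ∫ t in u..v, |f t - f m / m * t| :=
    intervalIntegral.abs_integral_le_integral_abs hle
  have hmono2 := intervalIntegral.integral_mono_on hle hgint hbint hpt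
  have hum : u ≤ m := by rw [hm]; linarith
  have hmv : m ≤ v := by rw [hm]; linarith
  have huv0 : u + v ≠ 0 := by intro h; nlinarith
  have habsint : (∫ t in u..v, |t - m|) = (v - u) ^ 2 / 4 := by
    have hint1 : IntervalIntegrable (fun t => |t - m|) MeasureTheory.volume u m :=
      (continuous_id.sub continuous_const).abs.intervalIntegrable u m
    have hint2 : IntervalIntegrable (fun t => |t - m|) MeasureTheory.volume m v :=
      (continuous_id.sub continuous_const).abs.intervalIntegrable m v
    have h1 : (∫ t in u..m, |t - m|) = (m - u) ^ 2 / 2 := by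
      rw [intervalIntegral.integral_congr (g := fun t => m - t) ?_]
      · rw [intervalIntegral.integral_sub intervalIntegrable_const
          intervalIntegral.intervalIntegrable_id, integral_id,
          intervalIntegral.integral_const]
        simp only [smul_eq_mul]
        ring
      · intro t ht
        rw [Set.uIcc_of_le hum] at ht
        simp only
        rw [abs_of_nonpos (by linarith [ht.2])]
        ring
    have h2 : (∫ t in m..v, |t - m|) = (v - m) ^ 2 / 2 := by
      rw [intervalIntegral.integral_congr (g := fun t => t - m) ?_]
      · rw [intervalIntegral.integral_sub intervalIntegral.intervalIntegrable_id
          intervalIntegrable_const, integral_id,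
          intervalIntegral.integral_const]
        simp only [smul_eq_mul]
        ring
      · intro t ht
        rw [Set.uIcc_of_le hmv] at ht
        simp only
        rw [abs_of_nonneg (by linarith [ht.1])]
    rw [← intervalIntegral.integral_add_adjacent_intervals hint1 hint2, h1, h2, hm]
    ring
  have hbval : (∫ t in u..v, M / m * |t - m|) = M / 2 * ((v - u) ^ 2 / (u + v)) := by
    rw [intervalIntegral.integral_const_mul, habsint, hm]
    field_simp
    ring
  rw [hsplit]
  calc |∫ t in u..v, (f t - f m / m * t)| ≤ ∫ t in u..v, |f t - f m / m * t| := habs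
    _ ≤ ∫ t in u..v, M / m * |t - m| := hmono2
    _ = M / 2 * ((v - u) ^ 2 / (u + v)) := hbval

/-- Corollary 5.2: error estimate for the midpoint rule built on Pompeiu's inequality. -/
theorem pompeiu_midpoint_rule (a b : ℝ) (f : ℝ → ℝ)
    (ha : 0 < a) (hab : a < b)
    (hf : ContinuousOn f (Set.Icc a b))
    (hd : DifferentiableOn ℝ f (Set.Ioo a b))
    (hbdd : BddAbove ((fun ξ => |f ξ - ξ * deriv f ξ|) '' Set.Ioo a b))
    (n : ℕ) (x : ℕ → ℝ)
    (hx0 : x 0 = a) (hxn : x n = b)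
    (hmono : ∀ i < n, x i < x (i + 1)) :
    |(∫ t in a..b, f t) -
        ∑ i ∈ Finset.range n, f ((x i + x (i + 1)) / 2) * (x (i + 1) - x i)| ≤
      sSup ((fun ξ => |f ξ - ξ * deriv f ξ|) '' Set.Ioo a b) / 2 *
        ∑ i ∈ Finset.range n, (x (i + 1) - x i) ^ 2 / (x i + x (i + 1)) ∧
    sSup ((fun ξ => |f ξ - ξ * deriv f ξ|) '' Set.Ioo a b) / 2 *
        ∑ i ∈ Finset.range n, (x (i + 1) - x i) ^ 2 / (x i + x (i + 1)) ≤
      sSup ((fun ξ => |f ξ - ξ * deriv f ξ|) '' Set.Ioo a b) / (4 * a) *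
        ∑ i ∈ Finset.range n, (x (i + 1) - x i) ^ 2 := by
  set M := sSup ((fun ξ => |f ξ - ξ * deriv f ξ|) '' Set.Ioo a b) with hM
  have hmono' : ∀ i j, i ≤ j → j ≤ n → x i ≤ x j := by
    intro i j hij hjn
    induction hij with
    | refl => exact le_rfl
    | @step k hk ih =>
        exact le_trans (ih (by omega)) (le_of_lt (hmono k (by omega)))
  have hmem : ∀ i ≤ n, x i ∈ Set.Icc a b := fun i hi =>
    ⟨hx0 ▸ hmono' 0 i (Nat.zero_le _) hi, hxn ▸ hmono' i n hi le_rfl⟩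
  have hint : ∀ k < n, IntervalIntegrable f MeasureTheory.volume (x k) (x (k + 1)) := by
    intro k hk
    exact (hf.mono (Set.Icc_subset_Icc (hmem k (le_of_lt hk)).1
      (hmem (k + 1) hk).2)).intervalIntegrable_of_Icc (le_of_lt (hmono k hk))
  have hsum : (∫ t in a..b, f t)
      = ∑ i ∈ Finset.range n, ∫ t in x i..x (i + 1), f t := by
    rw [← hx0, ← hxn]
    exact (intervalIntegral.sum_integral_adjacent_intervals hint).symm
  have hdiff : (∫ t in a..b, f t) -
      ∑ i ∈ Finset.range n, f ((x i + x (i + 1)) / 2) * (x (i + 1) - x i)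
      = ∑ i ∈ Finset.range n, ((∫ t in x i..x (i + 1), f t)
          - f ((x i + x (i + 1)) / 2) * (x (i + 1) - x i)) := by
    rw [hsum, Finset.sum_sub_distrib]
  have hM0 : 0 ≤ M := by
    have hmemξ : ((a + b) / 2) ∈ Set.Ioo a b := ⟨by linarith, by linarith⟩
    exact le_trans (abs_nonneg _) (le_csSup hbdd (Set.mem_image_of_mem _ hmemξ))
  constructor
  · rw [hdiff]
    calc |∑ i ∈ Finset.range n, ((∫ t in x i..x (i + 1), f t)
            - f ((x i + x (i + 1)) / 2) * (x (i + 1) - x i))|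
        ≤ ∑ i ∈ Finset.range n, |(∫ t in x i..x (i + 1), f t)
            - f ((x i + x (i + 1)) / 2) * (x (i + 1) - x i)| :=
          Finset.abs_sum_le_sum_abs _ _
      _ ≤ ∑ i ∈ Finset.range n,
            M / 2 * ((x (i + 1) - x i) ^ 2 / (x i + x (i + 1))) := by
          refine Finset.sum_le_sum fun i hi => ?_
          rw [Finset.mem_range] at hi
          exact midpoint_interval a b f ha hf hd hbdd (hmem i (le_of_lt hi))
            (hmem (i + 1) hi) (hmono i hi)
      _ = M / 2 * ∑ i ∈ Finset.range n,
            (x (i + 1) - x i) ^ 2 / (x i + x (i + 1)) := (Finset.mul_sum _ _ _).symm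
  · have step1 : ∑ i ∈ Finset.range n, (x (i + 1) - x i) ^ 2 / (x i + x (i + 1))
        ≤ ∑ i ∈ Finset.range n, (x (i + 1) - x i) ^ 2 / (2 * a) := by
      refine Finset.sum_le_sum fun i hi => ?_
      rw [Finset.mem_range] at hi
      have h1 := (hmem i (le_of_lt hi)).1
      have h2 := (hmem (i + 1) hi).1
      exact div_le_div_of_nonneg_left (sq_nonneg _) (by linarith) (by linarith)
    calc M / 2 * ∑ i ∈ Finset.range n, (x (i + 1) - x i) ^ 2 / (x i + x (i + 1))
        ≤ M / 2 * ∑ i ∈ Finset.range n, (x (i + 1) - x i) ^ 2 / (2 * a) :=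
          mul_le_mul_of_nonneg_left step1 (by positivity)
      _ = M / (4 * a) * ∑ i ∈ Finset.range n, (x (i + 1) - x i) ^ 2 := by
          rw [← Finset.sum_div]
          ring
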